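/- Let G be a (P_m, complement of (K_3+2P_1))-free graph and let c,d be fixed integers. Let S,T be two disjoint vertex subsets with |S| ≤ c, χ(G[T]) ≤ d, and G[T ∪ S] connected. Suppose every vertex in S is nonadjacent to at least one of any pair of nonadjacent vertices x_1, x_2 ∈ T, and there exists a vertex w ∈ V(G)\(S∪T) complete to S ∪ T. Then |T| is bounded by a function of m, c, and d only. -/

import Mathlib

open SimpleGraph

/-- `G` contains no induced subgraph isomorphic to `H`. -/
def HFree {W V : Type*} (H : SimpleGraph W) (G : SimpleGraph V) : Prop :=
  IsEmpty (H ↪g G)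

/-- `G` is `k`-vertex-critical: `χ(G) = k` and deleting any vertex decreases
the chromatic number below `k`. -/
def IsKVertexCritical {V : Type*} (G : SimpleGraph V) (k : ℕ) : Prop :=
  G.chromaticNumber = k ∧ ∀ v : V, (G.induce {v}ᶜ).chromaticNumber < k

/-- The star `K_{1,s}`: center `0`, leaves `1, …, s`. -/
def starGraph (s : ℕ) : SimpleGraph (Fin (s + 1)) :=
  SimpleGraph.fromRel (fun i _ => (i : ℕ) = 0)

/-- `K_{1,s} + P_1`: the disjoint union of the star `K_{1,s}`
(center `0`, leaves `1, …, s`) and the isolated vertex `s + 1`. -/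
def starPlusP1 (s : ℕ) : SimpleGraph (Fin (s + 2)) :=
  SimpleGraph.fromRel (fun i j => (i : ℕ) = 0 ∧ (j : ℕ) ≠ 0 ∧ (j : ℕ) ≤ s)

/-- The complement of `K_3 + 2P_1`: vertices `0,1,2` pairwise nonadjacent,
vertices `3,4` adjacent to everything else. -/
def coK3Plus2P1 : SimpleGraph (Fin 5) :=
  SimpleGraph.fromRel (fun i j => 3 ≤ (i : ℕ) ∨ 3 ≤ (j : ℕ))

section Helpers
open Finset

lemma dist_adj_le' {V : Type*} {G : SimpleGraph V} (h : G.Connected) (u a b : V) (hab : G.Adj a b) :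
    G.dist u b ≤ G.dist u a + 1 := by
  obtain ⟨q, hq⟩ := (h u a).exists_walk_length_eq_dist
  calc G.dist u b ≤ (q.append hab.toWalk).length := SimpleGraph.dist_le _
    _ = G.dist u a + 1 := by simp [SimpleGraph.Walk.length_append, hq]

lemma dist_getVert' {V : Type*} {G : SimpleGraph V} (h : G.Connected) {u v : V} (p : G.Walk u v)
    (hp : p.length = G.dist u v) {i : ℕ} (hi : i ≤ p.length) : G.dist u (p.getVert i) = i := by
  have hle : ∀ j : ℕ, j ≤ p.length → G.dist u (p.getVert j) ≤ j := by
    intro j hj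
    induction j with
    | zero => simp [p.getVert_zero]
    | succ n ih =>
      have h1 : G.dist u (p.getVert n) ≤ n := ih (le_of_lt (Nat.lt_of_succ_le hj))
      have h2 := dist_adj_le' h u (p.getVert n) (p.getVert (n+1))
        (p.adj_getVert_succ (Nat.lt_of_succ_le hj))
      omega
  have hge : ∀ k j : ℕ, j + k = p.length → G.dist (p.getVert j) v ≤ k := by
    intro k
    induction k with
    | zero =>
      intro j hj
      rw [Nat.add_zero] at hj
      have hv : p.getVert j = v := by rw [hj, p.getVert_length]
      simp [hv]
    | succ n ih =>
      intro j hj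
      have hadj := p.adj_getVert_succ (by omega : j < p.length)
      have h2 := ih (j+1) (by omega)
      have h3 := dist_adj_le' h v (p.getVert (j+1)) (p.getVert j) hadj.symm
      have h4 : G.dist v (p.getVert (j+1)) = G.dist (p.getVert (j+1)) v := SimpleGraph.dist_comm ..
      have h5 : G.dist v (p.getVert j) = G.dist (p.getVert j) v := SimpleGraph.dist_comm ..
      omega
  have htri := h.dist_triangle (u := u) (v := p.getVert i) (w := v)
  have h1 := hle i hi
  have h2 := hge (p.length - i) i (by omega)
  omega

lemma embed_path' {V : Type*} {G : SimpleGraph V} (h : G.Connected) {m : ℕ} (u v : V)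
    (hd : m ≤ G.dist u v + 1) : Nonempty (pathGraph m ↪g G) := by
  rcases Nat.eq_zero_or_pos m with hm | hm
  · subst hm
    exact ⟨⟨⟨Fin.elim0, fun {a} => a.elim0⟩, fun {a} => a.elim0⟩⟩
  obtain ⟨p, hp⟩ := (h u v).exists_walk_length_eq_dist
  have hdist : ∀ i : Fin m, G.dist u (p.getVert i) = i := by
    intro i
    exact dist_getVert' h p hp (by have := i.isLt; omega)
  refine ⟨⟨⟨fun i => p.getVert i, ?_⟩, ?_⟩⟩
  · intro i j hij
    have h1 := hdist i
    have h2 := hdist j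
    simp only at hij
    rw [hij] at h1
    exact Fin.ext (by omega)
  · intro i j
    show G.Adj (p.getVert ↑i) (p.getVert ↑j) ↔ _
    constructor
    · intro hadj
      have h1 := hdist i
      have h2 := hdist j
      have h3 := dist_adj_le' h u _ _ hadj
      have h4 := dist_adj_le' h u _ _ hadj.symm
      have h5 : (i : ℕ) ≠ (j : ℕ) := by
        intro he
        have : p.getVert i = p.getVert j := by rw [he]
        exact G.irrefl (this ▸ hadj)
      rw [pathGraph_adj]
      omega
    · intro hadj
      rw [pathGraph_adj] at hadj
      have hjlt := j.isLt
      have hilt := i.isLt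
      rcases hadj with h1 | h1
      · have : (i : ℕ) < p.length := by omega
        have := p.adj_getVert_succ this
        rwa [h1] at this
      · have : (j : ℕ) < p.length := by omega
        have := p.adj_getVert_succ this
        rw [h1] at this
        exact this.symm

lemma ball_card_le {W : Type*} [Fintype W] [DecidableEq W] {H : SimpleGraph W}
    [DecidableRel H.Adj] (hc : H.Connected) (Δ : ℕ)
    (hdeg : ∀ a : W, (Finset.univ.filter (fun b => H.Adj a b)).card ≤ Δ)
    (u : W) (r : ℕ) (hball : ∀ v : W, H.dist u v ≤ r) :
    Fintype.card W ≤ (Δ + 1) ^ r := by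
  classical
  set A : ℕ → Finset W := fun k => Finset.univ.filter (fun v => H.dist u v ≤ k) with hA
  have hcard : ∀ k, (A k).card ≤ (Δ + 1) ^ k := by
    intro k
    induction k with
    | zero =>
      have : A 0 ⊆ {u} := by
        intro v hv
        simp only [hA, Finset.mem_filter, Finset.mem_univ, true_and, Nat.le_zero] at hv
        have := hc.dist_eq_zero_iff.mp hv
        simp [this.symm]
      calc (A 0).card ≤ ({u} : Finset W).card := Finset.card_le_card this
        _ = 1 := Finset.card_singleton u
        _ ≤ _ := le_refl _
    | succ n ih =>
      have hsub : A (n+1) ⊆ (A n).biUnion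
          (fun a => insert a (Finset.univ.filter (fun b => H.Adj a b))) := by
        intro v hv
        simp only [hA, Finset.mem_filter, Finset.mem_univ, true_and] at hv
        rcases Nat.lt_or_ge (H.dist u v) (n+1) with hlt | hge
        · refine Finset.mem_biUnion.mpr ⟨v, ?_, Finset.mem_insert_self _ _⟩
          simp [hA, Nat.lt_succ_iff.mp hlt]
        · have hd : H.dist u v = n + 1 := le_antisymm hv hge
          obtain ⟨p, hp⟩ := (hc u v).exists_walk_length_eq_dist
          have hdn : H.dist u (p.getVert n) = n :=
            dist_getVert' hc p hp (by omega)
          have hadj : H.Adj (p.getVert n) v := by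
            have h1 := p.adj_getVert_succ (i := n) (by omega)
            have h2 : p.getVert (n+1) = v := by
              rw [← hp] at hd; rw [← hd, p.getVert_length]
            rwa [h2] at h1
          refine Finset.mem_biUnion.mpr ⟨p.getVert n, ?_, ?_⟩
          · simp [hA, hdn]
          · exact Finset.mem_insert_of_mem (by simp [hadj])
      calc (A (n+1)).card ≤ _ := Finset.card_le_card hsub
        _ ≤ ∑ a ∈ A n, (insert a (Finset.univ.filter (fun b => H.Adj a b))).card :=
            Finset.card_biUnion_le
        _ ≤ ∑ _a ∈ A n, (Δ + 1) := by
            refine Finset.sum_le_sum fun a _ => ?_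
            calc (insert a (Finset.univ.filter (fun b => H.Adj a b))).card
                ≤ (Finset.univ.filter (fun b => H.Adj a b)).card + 1 :=
                  Finset.card_insert_le _ _
              _ ≤ Δ + 1 := by have := hdeg a; omega
        _ = (A n).card * (Δ + 1) := by rw [Finset.sum_const, smul_eq_mul]
        _ ≤ (Δ + 1) ^ n * (Δ + 1) := Nat.mul_le_mul_right _ ih
        _ = (Δ + 1) ^ (n + 1) := (pow_succ _ _).symm
  have huniv : (Finset.univ : Finset W) = A r := by
    ext v; simp [hA, hball v]
  calc Fintype.card W = (A r).card := by rw [← huniv]; rfl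
    _ ≤ (Δ + 1) ^ r := hcard r



lemma coK3_embed {V : Type*} (G : SimpleGraph V) (x₁ x₂ x₃ a w : V)
    (h12 : x₁ ≠ x₂) (h13 : x₁ ≠ x₃) (h23 : x₂ ≠ x₃)
    (n12 : ¬ G.Adj x₁ x₂) (n13 : ¬ G.Adj x₁ x₃) (n23 : ¬ G.Adj x₂ x₃)
    (a1 : G.Adj a x₁) (a2 : G.Adj a x₂) (a3 : G.Adj a x₃)
    (w1 : G.Adj w x₁) (w2 : G.Adj w x₂) (w3 : G.Adj w x₃) (wa : G.Adj w a) :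
    Nonempty (coK3Plus2P1 ↪g G) := by
  have a1' := a1.symm
  have a2' := a2.symm
  have a3' := a3.symm
  have w1' := w1.symm
  have w2' := w2.symm
  have w3' := w3.symm
  have wa'' := wa.symm
  have n12' : ¬ G.Adj x₂ x₁ := fun h => n12 h.symm
  have n13' : ¬ G.Adj x₃ x₁ := fun h => n13 h.symm
  have n23' : ¬ G.Adj x₃ x₂ := fun h => n23 h.symm
  have ax1 : a ≠ x₁ := G.ne_of_adj a1
  have ax2 : a ≠ x₂ := G.ne_of_adj a2
  have ax3 : a ≠ x₃ := G.ne_of_adj a3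
  have wx1 : w ≠ x₁ := G.ne_of_adj w1
  have wx2 : w ≠ x₂ := G.ne_of_adj w2
  have wx3 : w ≠ x₃ := G.ne_of_adj w3
  have wa' : w ≠ a := G.ne_of_adj wa
  set f : Fin 5 → V := ![x₁, x₂, x₃, a, w] with hf
  have hinj : Function.Injective f := by
    intro i j hij
    fin_cases i <;> fin_cases j <;>
      simp only [hf, Matrix.cons_val_zero, Matrix.cons_val_one, Matrix.cons_val_two,
        Matrix.cons_val_three, Matrix.cons_val_four, Matrix.head_cons,
        Matrix.vecHead, Matrix.vecTail, Function.comp_apply, Fin.isValue] at hij <;>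
      first
        | rfl
        | (exfalso; simp_all)
  refine ⟨⟨⟨f, hinj⟩, ?_⟩⟩
  intro i j
  simp only [Function.Embedding.coeFn_mk]
  fin_cases i <;> fin_cases j <;>
    simp only [hf, coK3Plus2P1, SimpleGraph.fromRel_adj, Matrix.cons_val_zero,
      Matrix.cons_val_one, Matrix.cons_val_two, Matrix.cons_val_three, Matrix.cons_val_four,
      Matrix.head_cons, Matrix.vecHead, Matrix.vecTail, Function.comp_apply, Fin.isValue] <;>
    norm_num <;>
    first
      | assumption
      | exact G.irrefl
      | simp_all

end Helpers

theorem stmt5 : ∃ B : ℕ → ℕ → ℕ → ℕ,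
    ∀ (m c d : ℕ) (V : Type) [Fintype V] (G : SimpleGraph V),
      HFree (pathGraph m) G → HFree coK3Plus2P1 G →
      ∀ S T : Set V, Disjoint S T → S.ncard ≤ c →
        (G.induce T).chromaticNumber ≤ (d : ℕ∞) →
        (G.induce (T ∪ S)).Connected →
        (∀ u ∈ S, ∀ x₁ ∈ T, ∀ x₂ ∈ T, x₁ ≠ x₂ → ¬ G.Adj x₁ x₂ →
          (¬ G.Adj u x₁ ∨ ¬ G.Adj u x₂)) →
        (∃ w, w ∉ S ∪ T ∧ ∀ x ∈ S ∪ T, G.Adj w x) →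
        T.ncard ≤ B m c d := by
  classical
  refine ⟨fun m c d => (2 * d + c + 1) ^ m, ?_⟩
  intro m c d V _ G hPf hKf S T hdisj hSc hχ hconn _hSpair hwex
  have hP : IsEmpty (pathGraph m ↪g G) := hPf
  have hK : IsEmpty (coK3Plus2P1 ↪g G) := hKf
  obtain ⟨w, hwmem, hwadj⟩ := hwex
  obtain ⟨C⟩ := chromaticNumber_le_iff_colorable.mp hχ
  set col : V → ℕ := fun x => if hx : x ∈ T then (C ⟨x, hx⟩ : ℕ) else 0 with hcol
  -- Step 1: every vertex of T ∪ S has at most 2d neighbors in T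
  have hNT : ∀ a : V, a ∈ T ∪ S →
      (Finset.univ.filter (fun x => x ∈ T ∧ G.Adj a x)).card ≤ 2 * d := by
    intro a ha
    by_contra hlt
    push_neg at hlt
    set s : Finset V := Finset.univ.filter (fun x => x ∈ T ∧ G.Adj a x) with hs
    have hmaps : ∀ x ∈ s, col x ∈ Finset.range d := by
      intro x hx
      simp only [hs, Finset.mem_filter] at hx
      have hxT := hx.2.1
      simp only [hcol, hxT, dif_pos, Finset.mem_range]
      exact (C ⟨x, hxT⟩).isLt
    obtain ⟨y, _, hy⟩ := Finset.exists_lt_card_fiber_of_mul_lt_card_of_maps_to (n := 2) hmaps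
      (by rw [Finset.card_range]; omega)
    obtain ⟨x₁, hx₁, x₂, hx₂, x₃, hx₃, h12, h13, h23⟩ := Finset.two_lt_card.mp hy
    simp only [hs, Finset.mem_filter, Finset.mem_univ, true_and] at hx₁ hx₂ hx₃
    obtain ⟨⟨hT1, hA1⟩, hc1⟩ := hx₁
    obtain ⟨⟨hT2, hA2⟩, hc2⟩ := hx₂
    obtain ⟨⟨hT3, hA3⟩, hc3⟩ := hx₃
    have hnadj : ∀ (x x' : V) (hx : x ∈ T) (hx' : x' ∈ T),
        col x = col x' → x ≠ x' → ¬ G.Adj x x' := by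
      intro x x' hx hx' hcc hne hadj
      have : (G.induce T).Adj ⟨x, hx⟩ ⟨x', hx'⟩ := by
        simpa [comap_adj] using hadj
      have hCne := C.valid this
      apply hCne
      have : (C ⟨x, hx⟩ : ℕ) = (C ⟨x', hx'⟩ : ℕ) := by
        simpa only [hcol, dif_pos hx, dif_pos hx'] using hcc
      exact Fin.ext this
    have hwa : G.Adj w a := hwadj a (by rcases ha with h | h
                                        · exact Set.mem_union_right _ h
                                        · exact Set.mem_union_left _ h)
    have hK' := coK3_embed G x₁ x₂ x₃ a w h12 h13 h23
      (hnadj x₁ x₂ hT1 hT2 (hc1.trans hc2.symm) h12)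
      (hnadj x₁ x₃ hT1 hT3 (hc1.trans hc3.symm) h13)
      (hnadj x₂ x₃ hT2 hT3 (hc2.trans hc3.symm) h23)
      hA1 hA2 hA3
      (hwadj x₁ (Set.mem_union_right _ hT1))
      (hwadj x₂ (Set.mem_union_right _ hT2))
      (hwadj x₃ (Set.mem_union_right _ hT3))
      hwa
    exact hK.false hK'.some
  -- Step 2: degree bound in the induced graph H
  set H : SimpleGraph ↥(T ∪ S) := G.induce (T ∪ S) with hH
  have hdeg : ∀ a : ↥(T ∪ S),
      (Finset.univ.filter (fun b => H.Adj a b)).card ≤ 2 * d + c := by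
    intro a
    have hsub : (Finset.univ.filter (fun b => H.Adj a b)).card ≤
        ((Finset.univ.filter (fun x => x ∈ T ∧ G.Adj (a : V) x)) ∪ S.toFinset).card := by
      apply Finset.card_le_card_of_injOn Subtype.val
      · intro b hb
        simp only [Finset.coe_filter, Finset.mem_filter, Finset.mem_univ, true_and, Set.mem_setOf_eq] at hb
        have hadj : G.Adj (a : V) (b : V) := by simpa [hH, comap_adj] using hb
        rcases b.2 with hbT | hbS
        · exact Finset.mem_union_left _ (by simp [hbT, hadj])
        · exact Finset.mem_union_right _ (by simp [hbS])
      · exact Subtype.val_injective.injOn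
    have hScard : S.toFinset.card ≤ c := by
      rwa [← Set.ncard_eq_toFinset_card']
    calc (Finset.univ.filter (fun b => H.Adj a b)).card
        ≤ _ := hsub
      _ ≤ (Finset.univ.filter (fun x => x ∈ T ∧ G.Adj (a : V) x)).card + S.toFinset.card :=
          Finset.card_union_le _ _
      _ ≤ 2 * d + c := Nat.add_le_add (hNT a a.2) hScard
  -- Step 3: distance bound
  have hdist : ∀ u v : ↥(T ∪ S), H.dist u v ≤ m := by
    intro u v
    by_contra hgt
    push_neg at hgt
    have hle : m ≤ H.dist u v + 1 := by omega
    obtain ⟨e⟩ := embed_path' hconn u v hle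
    exact hP.false ((SimpleGraph.Embedding.induce (T ∪ S)).comp e)
  -- Step 4: cardinality bound
  obtain ⟨u⟩ := hconn.nonempty
  have hcard : Fintype.card ↥(T ∪ S) ≤ (2 * d + c + 1) ^ m :=
    ball_card_le hconn (2 * d + c) hdeg u m (hdist u)
  -- Step 5: conclude
  calc T.ncard ≤ (T ∪ S).ncard :=
        Set.ncard_le_ncard Set.subset_union_left (Set.toFinite _)
    _ = Fintype.card ↥(T ∪ S) := by
        rw [← Nat.card_coe_set_eq, Nat.card_eq_fintype_card]
    _ ≤ (2 * d + c + 1) ^ m := hcard
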